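/- For a standard Young tableau T of skew shape and an ordinary jeu de taquin slide into a single inner corner, the length of the longest strictly increasing subsequence of the reading word is preserved: LIS(jdt_x(T)) = LIS(T). -/
import Mathlib


open Finset
open scoped Classical

/-- A box of a Young diagram: (row, column), rows increasing downward. -/
abbrev Box : Type := ℕ × ℕ

/-- A Young diagram: a finite lower set in both coordinates. -/
def IsYoung (μ : Finset Box) : Prop :=
  (∀ r c : ℕ, (r + 1, c) ∈ μ → (r, c) ∈ μ) ∧
  (∀ r c : ℕ, (r, c + 1) ∈ μ → (r, c) ∈ μ)

/-- Two boxes are adjacent (share an edge). -/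
def adjB (a b : Box) : Prop :=
  (a.1 = b.1 ∧ (a.2 + 1 = b.2 ∨ b.2 + 1 = a.2)) ∨
  (a.2 = b.2 ∧ (a.1 + 1 = b.1 ∨ b.1 + 1 = a.1))

/-- Connectivity within a finite set of boxes. -/
def conn (S : Finset Box) (a b : Box) : Prop :=
  Relation.ReflTransGen (fun x y => x ∈ S ∧ y ∈ S ∧ adjB x y) a b

/-- Entries strictly increase along rows and columns. -/
def IncreasingOn (dom : Finset Box) (f : Box → ℕ) : Prop :=
  (∀ r c : ℕ, (r, c) ∈ dom → (r, c + 1) ∈ dom → f (r, c) < f (r, c + 1)) ∧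
  (∀ r c : ℕ, (r, c) ∈ dom → (r + 1, c) ∈ dom → f (r, c) < f (r + 1, c))

def maxEntry (dom : Finset Box) (f : Box → ℕ) : ℕ := dom.sup f

/-- An increasing tableau: positive entries, strictly increasing along rows and
columns, and every value `1,…,max` appears at least once. -/
def IsIncTab (dom : Finset Box) (f : Box → ℕ) : Prop :=
  IncreasingOn dom f ∧ (∀ b ∈ dom, 1 ≤ f b) ∧
  (∀ v : ℕ, 1 ≤ v → v ≤ maxEntry dom f → ∃ b ∈ dom, f b = v)

/-- A standard Young tableau: an increasing tableau with distinct entries. -/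
def IsSYT (dom : Finset Box) (f : Box → ℕ) : Prop :=
  IsIncTab dom f ∧ ∀ a ∈ dom, ∀ b ∈ dom, f a = f b → a = b

/-- An inner corner of `λ`: a maximally southeast box of `λ`. -/
def InnerCorner (lam : Finset Box) (x : Box) : Prop :=
  x ∈ lam ∧ (x.1 + 1, x.2) ∉ lam ∧ (x.1, x.2 + 1) ∉ lam

/-- An outer corner of `ν`: a maximally northwest box outside `ν`. -/
def OuterCorner (nu : Finset Box) (x : Box) : Prop :=
  x ∉ nu ∧ (x.1 = 0 ∨ (x.1 - 1, x.2) ∈ nu) ∧ (x.2 = 0 ∨ (x.1, x.2 - 1) ∈ nu)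

/-- No two boxes of `A` share a row or a column. -/
def NoTwoSameRowCol (A : Finset Box) : Prop :=
  ∀ a ∈ A, ∀ b ∈ A, a ≠ b → a.1 ≠ b.1 ∧ a.2 ≠ b.2

/-- One `switch` stage of a K-jdt slide: in the union of ribbons formed by the
•-boxes (`st.1`) and the boxes of the numerical region `st.2.1` with entry `i`,
swap the two symbols on every connected component with at least two boxes
(single-box components are unchanged).  The state is (dots, numerical domain,
numerical entries). -/
noncomputable def switchStep (st : Finset Box × Finset Box × (Box → ℕ)) (i : ℕ) :
    Finset Box × Finset Box × (Box → ℕ) :=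
  let dots := st.1
  let dom := st.2.1
  let f := st.2.2
  let S : Finset Box := dots ∪ dom.filter (fun b => f b = i)
  let sw : Box → Prop := fun b => ∃ b' ∈ S, b' ≠ b ∧ conn S b b'
  ( dom.filter (fun b => f b = i ∧ sw b) ∪ dots.filter (fun b => ¬ sw b),
    dom.filter (fun b => ¬ (f b = i ∧ sw b)) ∪ dots.filter sw,
    fun b => if b ∈ dots ∧ sw b then i else f b )

/-- The state of a K-jdt slide started with •'s at `xs`, after processing the
values `1, 2, …, m`. -/
noncomputable def KState (xs dom : Finset Box) (f : Box → ℕ) (m : ℕ) :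
    Finset Box × Finset Box × (Box → ℕ) :=
  (List.range m).foldl (fun st i => switchStep st (i + 1)) (xs, dom, f)

/-- The K-theoretic jeu de taquin slide of the tableau `(dom, f)` into the set
`xs` of inner corners: process the values `1,…,max` and discard the final •'s. -/
noncomputable def KJdt (xs dom : Finset Box) (f : Box → ℕ) : Finset Box × (Box → ℕ) :=
  ((KState xs dom f (maxEntry dom f)).2.1, (KState xs dom f (maxEntry dom f)).2.2)

/-- The state of a reverse K-jdt slide: •'s start at `xs` (outer corners) and the
values `m, m-1, …, 1` are processed in decreasing order. -/
noncomputable def KRevState (xs dom : Finset Box) (f : Box → ℕ) (m : ℕ) :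
    Finset Box × Finset Box × (Box → ℕ) :=
  (List.range m).foldr (fun i st => switchStep st (i + 1)) (xs, dom, f)

/-- A slide applied to the state (inner shape `λ`, tableau domain, entries). -/
noncomputable def doSlide (st : Finset Box × Finset Box × (Box → ℕ)) (xs : Finset Box) :
    Finset Box × Finset Box × (Box → ℕ) :=
  (st.1 \ xs, (KJdt xs st.2.1 st.2.2).1, (KJdt xs st.2.1 st.2.2).2)

/-- A reverse slide applied to the state (inner shape `λ`, tableau domain, entries). -/
noncomputable def doRevSlide (st : Finset Box × Finset Box × (Box → ℕ)) (xs : Finset Box) :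
    Finset Box × Finset Box × (Box → ℕ) :=
  (st.1 \ (KRevState xs st.2.1 st.2.2 (maxEntry st.2.1 st.2.2)).1,
   (KRevState xs st.2.1 st.2.2 (maxEntry st.2.1 st.2.2)).2.1,
   (KRevState xs st.2.1 st.2.2 (maxEntry st.2.1 st.2.2)).2.2)

/-- One step of a rectification: a K-jdt slide into a nonempty set of inner corners. -/
def RectStep (p q : Finset Box × Finset Box × (Box → ℕ)) : Prop :=
  ∃ xs : Finset Box, xs.Nonempty ∧ (∀ x ∈ xs, InnerCorner p.1 x) ∧ q = doSlide p xs

/-- The tableau `(dom, f)` of shape `ν/λ` admits a rectification order ending at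
the straight-shape tableau `(dom', f')`. -/
def RectTo (lam dom : Finset Box) (f : Box → ℕ) (dom' : Finset Box) (f' : Box → ℕ) : Prop :=
  ∃ g : Box → ℕ, Relation.ReflTransGen RectStep (lam, dom, f) (∅, dom', g) ∧
    ∀ b ∈ dom', g b = f' b

def rowLen (μ : Finset Box) (r : ℕ) : ℕ := (μ.filter (fun b => b.1 = r)).card

/-- The superstandard tableau of straight shape `μ`: rows filled consecutively. -/
def sstd (μ : Finset Box) : Box → ℕ :=
  fun b => (∑ i ∈ Finset.range b.1, rowLen μ i) + b.2 + 1

/-- `a` occurs before `b` in the reading word (rows left to right, bottom to top). -/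
def ReadBefore (a b : Box) : Prop := b.1 < a.1 ∨ (a.1 = b.1 ∧ a.2 < b.2)

/-- Length of the longest strictly increasing subsequence of the reading word. -/
noncomputable def LIS (dom : Finset Box) (f : Box → ℕ) : ℕ :=
  (dom.powerset.filter
    (fun I => ∀ a ∈ I, ∀ b ∈ I, ReadBefore a b → f a < f b)).sup Finset.card

/-- One step of K-infusion: slide the boxes carrying the largest label `m` of the
inner tableau through the outer tableau, recording `m` at the vacated holes. -/
noncomputable def infusionStep
    (st : (Finset Box × (Box → ℕ)) × (Finset Box × (Box → ℕ)) × (Finset Box × (Box → ℕ))) :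
    (Finset Box × (Box → ℕ)) × (Finset Box × (Box → ℕ)) × (Finset Box × (Box → ℕ)) :=
  let m := maxEntry st.1.1 st.1.2
  let xs := st.1.1.filter (fun b => st.1.2 b = m)
  let ks := KState xs st.2.1.1 st.2.1.2 (maxEntry st.2.1.1 st.2.1.2)
  ( (st.1.1 \ xs, st.1.2),
    (ks.2.1, ks.2.2),
    (st.2.2.1 ∪ ks.1, fun b => if b ∈ ks.1 then m else st.2.2.2 b) )

/-- K-infusion of the pair `(T, U)`, where `U`'s shape extends `T`'s shape:
returns `(K-infusion₁(T,U), K-infusion₂(T,U))`. -/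
noncomputable def KInfusion (Tdom : Finset Box) (Tf : Box → ℕ)
    (Udom : Finset Box) (Uf : Box → ℕ) :
    (Finset Box × (Box → ℕ)) × (Finset Box × (Box → ℕ)) :=
  ((infusionStep^[maxEntry Tdom Tf] ((Tdom, Tf), (Udom, Uf), (∅, fun _ => 0))).2.1,
   (infusionStep^[maxEntry Tdom Tf] ((Tdom, Tf), (Udom, Uf), (∅, fun _ => 0))).2.2)

/-- `Δ(T)`: erase the entry `1` at the northwest corner, subtract one from the
remaining entries, and slide into the vacated corner. -/
noncomputable def Delta (p : Finset Box × (Box → ℕ)) : Finset Box × (Box → ℕ) :=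
  KJdt {((0 : ℕ), (0 : ℕ))} (p.1.erase (0, 0)) (fun b => p.2 b - 1)

/-- K-evacuation: box `b` receives label `i` when `b` belongs to the shape of
`Δ^{i-1}(T)` but not to the shape of `Δ^{i}(T)`. -/
noncomputable def Kevac (p : Finset Box × (Box → ℕ)) : Box → ℕ :=
  fun b => sInf {i : ℕ | b ∉ (Delta^[i] p).1}

/-- A horizontal strip: no two boxes in the same column. -/
def HorizontalStrip (dom : Finset Box) : Prop :=
  ∀ a ∈ dom, ∀ b ∈ dom, a ≠ b → a.2 ≠ b.2

def LeftmostIn (dom : Finset Box) (r c : ℕ) : Prop :=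
  (r, c) ∈ dom ∧ ∀ c' < c, (r, c') ∉ dom

def RightmostIn (dom : Finset Box) (r c : ℕ) : Prop :=
  (r, c) ∈ dom ∧ ∀ c' > c, (r, c') ∉ dom

/-- A `t`-Pieri filling of a horizontal strip: entries of each row consecutive,
the bottom row starts with `1`, each other row starts with the last entry of the
next nonempty row below it, or with that entry plus one; entries are `1,…,t`. -/
def IsPieri (dom : Finset Box) (f : Box → ℕ) (t : ℕ) : Prop :=
  HorizontalStrip dom ∧
  (∀ r c : ℕ, (r, c) ∈ dom → (r, c + 1) ∈ dom → f (r, c + 1) = f (r, c) + 1) ∧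
  (∀ r c : ℕ, LeftmostIn dom r c → (∀ b ∈ dom, b.1 ≤ r) → f (r, c) = 1) ∧
  (∀ r c r' c' : ℕ, LeftmostIn dom r c → RightmostIn dom r' c' → r < r' →
    (∀ b ∈ dom, ¬ (r < b.1 ∧ b.1 < r')) →
    (f (r, c) = f (r', c') ∨ f (r, c) = f (r', c') + 1)) ∧
  (∀ b ∈ dom, 1 ≤ f b ∧ f b ≤ t) ∧ (dom.Nonempty → ∃ b ∈ dom, f b = t)

/-- The domain of the one-row shape `(t)`. -/
def rowDom (t : ℕ) : Finset Box := (Finset.range t).image (fun c => ((0 : ℕ), c))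

/-- The entries of the superstandard one-row tableau `S_(t)`. -/
def rowEnt : Box → ℕ := fun b => b.2 + 1

def numRows (dom : Finset Box) : ℕ := (dom.image Prod.fst).card

/-- The number of increasing tableaux of shape `ν/λ` whose K-rectification (for
some, equivalently by Theorem 1 any, rectification order) is the superstandard
tableau `S_μ`.  Tableaux are normalized to vanish off their domain. -/
noncomputable def KrectCount (lam nu mu : Finset Box) : ℕ :=
  Set.ncard {f : Box → ℕ | (∀ b, b ∉ nu \ lam → f b = 0) ∧ IsIncTab (nu \ lam) f ∧
    ∃ g, Relation.ReflTransGen RectStep (lam, nu \ lam, f) (∅, mu, g) ∧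
      ∀ b ∈ mu, g b = sstd mu b}

/-- Apply a (forward or reverse) K-jdt slide, as specified by `mv`. -/
noncomputable def applyMove (st : Finset Box × Finset Box × (Box → ℕ))
    (mv : Bool × Finset Box) : Finset Box × Finset Box × (Box → ℕ) :=
  if mv.1 then doSlide st mv.2 else doRevSlide st mv.2

def ValidMove (st : Finset Box × Finset Box × (Box → ℕ)) (mv : Bool × Finset Box) : Prop :=
  mv.2.Nonempty ∧ (mv.1 = true → ∀ x ∈ mv.2, InnerCorner st.1 x) ∧
    (mv.1 = false → ∀ x ∈ mv.2, OuterCorner (st.1 ∪ st.2.1) x)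

noncomputable def applySeq (L : List (Bool × Finset Box))
    (st : Finset Box × Finset Box × (Box → ℕ)) : Finset Box × Finset Box × (Box → ℕ) :=
  L.foldl applyMove st

def ValidSeq : List (Bool × Finset Box) → (Finset Box × Finset Box × (Box → ℕ)) → Prop
  | [], _ => True
  | mv :: L, st => ValidMove st mv ∧ ValidSeq L (applyMove st mv)

/-- K-dual equivalence: every common sequence of (forward or reverse) slides
produces tableaux of the same shape. -/
def KDualEquiv (lam dom : Finset Box) (f g : Box → ℕ) : Prop :=
  ∀ L : List (Bool × Finset Box),
    ValidSeq L (lam, dom, f) → ValidSeq L (lam, dom, g) →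
    (applySeq L (lam, dom, f)).2.1 = (applySeq L (lam, dom, g)).2.1


/-- One step of the ordinary jeu de taquin slide: the hole `p.2.2` swaps with the
smaller of the entries directly right of and below it (if any). -/
noncomputable def holeMove (p : Finset Box × (Box → ℕ) × Box) :
    Finset Box × (Box → ℕ) × Box :=
  let dom := p.1
  let f := p.2.1
  let h := p.2.2
  let rightB : Box := (h.1, h.2 + 1)
  let downB : Box := (h.1 + 1, h.2)
  if rightB ∈ dom then
    if downB ∈ dom then
      if f rightB < f downB then
        (insert h (dom.erase rightB), Function.update f h (f rightB), rightB)
      else (insert h (dom.erase downB), Function.update f h (f downB), downB)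
    else (insert h (dom.erase rightB), Function.update f h (f rightB), rightB)
  else if downB ∈ dom then
    (insert h (dom.erase downB), Function.update f h (f downB), downB)
  else p

/-- The ordinary (Schützenberger) jeu de taquin slide into the inner corner `x`. -/
noncomputable def jdt (x : Box) (dom : Finset Box) (f : Box → ℕ) :
    Finset Box × (Box → ℕ) :=
  ((holeMove^[dom.card] (dom, f, x)).1, (holeMove^[dom.card] (dom, f, x)).2.1)

/-! ### Auxiliary development for stmt19 -/

section Stmt19Aux

/-- Left-closure of a Young diagram along a row. -/
lemma young_left {μ : Finset Box} (hμ : IsYoung μ) {r c : ℕ} (hc : (r, c) ∈ μ) :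
    ∀ j, j ≤ c → (r, j) ∈ μ := by
  induction c with
  | zero => intro j hj; interval_cases j; exact hc
  | succ n ih =>
    intro j hj
    rcases Nat.lt_or_ge j (n+1) with h' | h'
    · exact ih (hμ.2 r n hc) j (by omega)
    · have : j = n + 1 := by omega
      subst this; exact hc

/-- The slide invariant: the domain together with the hole is `skew ∪ {x}`,
the hole is weakly southeast of `x`, entries are increasing and distinct, and
entries facing each other across the hole are comparable. -/
def SlideInv (lam nu : Finset Box) (x : Box) (D : Finset Box) (g : Box → ℕ)
    (h : Box) : Prop :=
  h ∉ D ∧ insert h D = insert x (nu \ lam) ∧ x.1 ≤ h.1 ∧ x.2 ≤ h.2 ∧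
  IncreasingOn D g ∧ (∀ a ∈ D, ∀ b ∈ D, g a = g b → a = b) ∧
  (∀ r : ℕ, r + 1 = h.1 → (r, h.2) ∈ D → (h.1 + 1, h.2) ∈ D →
    g (r, h.2) < g (h.1 + 1, h.2)) ∧
  (∀ cc : ℕ, cc + 1 = h.2 → (h.1, cc) ∈ D → (h.1, h.2 + 1) ∈ D →
    g (h.1, cc) < g (h.1, h.2 + 1))

end Stmt19Aux
section Stmt19Aux2

lemma chain_mono {D₁ D₂ : Finset Box} {g₁ g₂ : Box → ℕ}
    (H : ∀ I : Finset Box, I ⊆ D₁ →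
        (∀ a ∈ I, ∀ b ∈ I, ReadBefore a b → g₁ a < g₁ b) →
        ∃ J : Finset Box, J ⊆ D₂ ∧
          (∀ a ∈ J, ∀ b ∈ J, ReadBefore a b → g₂ a < g₂ b) ∧ I.card ≤ J.card) :
    LIS D₁ g₁ ≤ LIS D₂ g₂ := by
  apply Finset.sup_le
  intro I hI
  simp only [Finset.mem_filter, Finset.mem_powerset] at hI
  obtain ⟨J, hJsub, hJchain, hcard⟩ := H I hI.1 hI.2
  refine le_trans hcard (Finset.le_sup ?_)
  simp only [Finset.mem_filter, Finset.mem_powerset]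
  exact ⟨hJsub, hJchain⟩

lemma rb_shift_right {r c : ℕ} {u : Box} (h1 : u ≠ (r, c)) (h2 : u ≠ (r, c+1)) :
    (ReadBefore u (r, c) ↔ ReadBefore u (r, c+1)) ∧
    (ReadBefore (r, c) u ↔ ReadBefore (r, c+1) u) := by
  obtain ⟨u1, u2⟩ := u
  have h1' : ¬(u1 = r ∧ u2 = c) := by simpa [Prod.ext_iff] using h1
  have h2' : ¬(u1 = r ∧ u2 = c + 1) := by simpa [Prod.ext_iff] using h2
  simp only [ReadBefore]
  omega

lemma rb_irrefl (a : Box) : ¬ ReadBefore a a := by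
  simp [ReadBefore]

/-- LIS is unchanged by the horizontal elementary slide move. -/
lemma LIS_moveRight {D : Finset Box} {g : Box → ℕ} {r c : ℕ}
    (hmem : (r, c+1) ∈ D) (hh : (r, c) ∉ D) :
    LIS (insert (r,c) (D.erase (r,c+1))) (Function.update g (r,c) (g (r,c+1)))
      = LIS D g := by
  set g' := Function.update g (r,c) (g (r,c+1)) with hg'
  have hgval : ∀ u : Box, u ≠ (r,c) → g' u = g u := by
    intro u hu; simp [hg', Function.update_of_ne hu]
  have hghole : g' (r,c) = g (r,c+1) := by simp [hg']
  apply le_antisymm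
  · -- new ≤ old
    apply chain_mono
    intro I hI hIc
    by_cases hin : (r,c) ∈ I
    · refine ⟨insert (r,c+1) (I.erase (r,c)), ?_, ?_, ?_⟩
      · intro a ha
        rcases Finset.mem_insert.1 ha with rfl | ha
        · exact hmem
        · have := hI (Finset.mem_of_mem_erase ha)
          rcases Finset.mem_insert.1 this with rfl | h2
          · exact absurd rfl (Finset.ne_of_mem_erase ha)
          · exact Finset.mem_of_mem_erase h2
      · have hne : ∀ u ∈ I.erase (r,c), u ≠ (r,c) ∧ u ≠ (r,c+1) := by
          intro u hu
          refine ⟨Finset.ne_of_mem_erase hu, ?_⟩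
          intro h; subst h
          have := hI (Finset.mem_of_mem_erase hu)
          rcases Finset.mem_insert.1 this with h | h
          · exact absurd h (by simp)
          · exact (Finset.notMem_erase _ _) h
        intro a ha b hb hrb
        rcases Finset.mem_insert.1 ha with rfl | ha <;>
          rcases Finset.mem_insert.1 hb with rfl | hb
        · exact absurd hrb (rb_irrefl _)
        · obtain ⟨hb1, hb2⟩ := hne b hb
          have : ReadBefore (r,c) b := ((rb_shift_right hb1 hb2).2).2 hrb
          have := hIc _ hin _ (Finset.mem_of_mem_erase hb) this
          rwa [hghole, hgval b hb1] at this
        · obtain ⟨ha1, ha2⟩ := hne a ha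
          have : ReadBefore a (r,c) := ((rb_shift_right ha1 ha2).1).2 hrb
          have := hIc _ (Finset.mem_of_mem_erase ha) _ hin this
          rwa [hghole, hgval a ha1] at this
        · have := hIc _ (Finset.mem_of_mem_erase ha) _ (Finset.mem_of_mem_erase hb) hrb
          rwa [hgval a (hne a ha).1, hgval b (hne b hb).1] at this
      · have h1 : (r,c+1) ∉ I.erase (r,c) := by
          intro h
          have := hI (Finset.mem_of_mem_erase h)
          rcases Finset.mem_insert.1 this with h2 | h2
          · simp at h2
          · exact ((Finset.notMem_erase _ _) h2).elim
        rw [Finset.card_insert_of_notMem h1, Finset.card_erase_of_mem hin]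
        have : 1 ≤ I.card := Finset.card_pos.2 ⟨_, hin⟩
        omega
    · refine ⟨I, ?_, ?_, le_refl _⟩
      · intro a ha
        have := hI ha
        rcases Finset.mem_insert.1 this with rfl | h2
        · exact absurd ha hin
        · exact Finset.mem_of_mem_erase h2
      · intro a ha b hb hrb
        have := hIc a ha b hb hrb
        rwa [hgval a (fun h => hin (h ▸ ha)), hgval b (fun h => hin (h ▸ hb))] at this
  · -- old ≤ new
    apply chain_mono
    intro I hI hIc
    by_cases hin : (r,c+1) ∈ I
    · refine ⟨insert (r,c) (I.erase (r,c+1)), ?_, ?_, ?_⟩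
      · intro a ha
        rcases Finset.mem_insert.1 ha with rfl | ha
        · exact Finset.mem_insert_self _ _
        · exact Finset.mem_insert_of_mem
            (Finset.mem_erase.2 ⟨Finset.ne_of_mem_erase ha, hI (Finset.mem_of_mem_erase ha)⟩)
      · have hne : ∀ u ∈ I.erase (r,c+1), u ≠ (r,c) ∧ u ≠ (r,c+1) := by
          intro u hu
          exact ⟨fun h => hh (h ▸ hI (Finset.mem_of_mem_erase hu)), Finset.ne_of_mem_erase hu⟩
        intro a ha b hb hrb
        rcases Finset.mem_insert.1 ha with rfl | ha <;>
          rcases Finset.mem_insert.1 hb with rfl | hb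
        · exact absurd hrb (rb_irrefl _)
        · obtain ⟨hb1, hb2⟩ := hne b hb
          have : ReadBefore (r,c+1) b := ((rb_shift_right hb1 hb2).2).1 hrb
          have := hIc _ hin _ (Finset.mem_of_mem_erase hb) this
          rwa [← hghole, ← hgval b hb1] at this
        · obtain ⟨ha1, ha2⟩ := hne a ha
          have : ReadBefore a (r,c+1) := ((rb_shift_right ha1 ha2).1).1 hrb
          have := hIc _ (Finset.mem_of_mem_erase ha) _ hin this
          rwa [← hghole, ← hgval a ha1] at this
        · have := hIc _ (Finset.mem_of_mem_erase ha) _ (Finset.mem_of_mem_erase hb) hrb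
          rwa [← hgval a (hne a ha).1, ← hgval b (hne b hb).1] at this
      · have h1 : (r,c) ∉ I.erase (r,c+1) := fun h => hh (hI (Finset.mem_of_mem_erase h))
        rw [Finset.card_insert_of_notMem h1, Finset.card_erase_of_mem hin]
        have : 1 ≤ I.card := Finset.card_pos.2 ⟨_, hin⟩
        omega
    · refine ⟨I, ?_, ?_, le_refl _⟩
      · intro a ha
        refine Finset.mem_insert_of_mem (Finset.mem_erase.2 ⟨?_, hI ha⟩)
        intro h; exact hin (h ▸ ha)
      · intro a ha b hb hrb
        have := hIc a ha b hb hrb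
        rwa [← hgval a (fun h => hh (h ▸ hI ha)), ← hgval b (fun h => hh (h ▸ hI hb))] at this

end Stmt19Aux2
section Stmt19Aux3

lemma row_chain_lt {D : Finset Box} {g : Box → ℕ} (inc : IncreasingOn D g)
    {s a b : ℕ} (hab : a < b) (hall : ∀ i, a ≤ i → i ≤ b → (s, i) ∈ D) :
    g (s, a) < g (s, b) := by
  induction b with
  | zero => omega
  | succ n ih =>
    rcases Nat.lt_or_ge a n with h | h
    · exact lt_trans (ih h (fun i h1 h2 => hall i h1 (by omega)))
        (inc.1 s n (hall n (by omega) (by omega)) (hall (n+1) (by omega) (by omega)))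
    · have ha : a = n := by omega
      subst ha
      exact inc.1 s a (hall a (by omega) (by omega)) (hall (a+1) (by omega) (by omega))

lemma row_chain_le {D : Finset Box} {g : Box → ℕ} (inc : IncreasingOn D g)
    {s a b : ℕ} (hab : a ≤ b) (hall : ∀ i, a ≤ i → i ≤ b → (s, i) ∈ D) :
    g (s, a) ≤ g (s, b) := by
  rcases Nat.lt_or_ge a b with h | h
  · exact le_of_lt (row_chain_lt inc h hall)
  · have : a = b := by omega
    subst this; exact le_refl _

/-- Rows of `skew ∪ {x}` are intervals. -/
lemma row_interval {lam nu : Finset Box} {x : Box}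
    (hlam : IsYoung lam) (hnu : IsYoung nu) (hx : InnerCorner lam x)
    {s a b j : ℕ} (ha : (s, a) ∈ insert x (nu \ lam))
    (hb : (s, b) ∈ insert x (nu \ lam)) (haj : a ≤ j) (hjb : j ≤ b) :
    (s, j) ∈ insert x (nu \ lam) := by
  rcases Finset.mem_insert.1 hb with hbx | hbs
  · -- (s,b) = x
    have hax : (s, a) = x := by
      rcases Finset.mem_insert.1 ha with h | h
      · exact h
      · exfalso
        have hal : (s, a) ∈ lam := by
          have : (s, b) ∈ lam := hbx ▸ hx.1
          exact young_left hlam this a (by omega)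
        exact (Finset.mem_sdiff.1 h).2 hal
    have : a = b := by
      have h1 : a = x.2 := by rw [← hax]
      have h2 : b = x.2 := by rw [← hbx]
      omega
    have : j = a := by omega
    subst this; exact ha
  · have hbs' := Finset.mem_sdiff.1 hbs
    have hjnu : (s, j) ∈ nu := young_left hnu hbs'.1 j hjb
    by_cases hjl : (s, j) ∈ lam
    · have hal : (s, a) ∈ lam := young_left hlam hjl a haj
      have hax : (s, a) = x := by
        rcases Finset.mem_insert.1 ha with h | h
        · exact h
        · exact absurd hal (Finset.mem_sdiff.1 h).2
      have hja : j = a := by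
        by_contra hne
        have h1 : a + 1 ≤ j := by omega
        have : (s, a + 1) ∈ lam := young_left hlam hjl (a+1) h1
        have hx2 : (x.1, x.2 + 1) ∉ lam := hx.2.2
        have : (x.1, x.2 + 1) ∈ lam := by
          have e1 : s = x.1 := by rw [← hax]
          have e2 : a = x.2 := by rw [← hax]
          rw [← e1, ← e2]; exact this
        exact hx2 this
      subst hja; rw [hax]; exact Finset.mem_insert_self _ _
    · exact Finset.mem_insert_of_mem (Finset.mem_sdiff.2 ⟨hjnu, hjl⟩)

/-- The box below a box of `skew ∪ {x}` weakly left of a skew box in the next row. -/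
lemma below_mem {lam nu : Finset Box} {x : Box}
    (hlam : IsYoung lam) (hnu : IsYoung nu) (hx : InnerCorner lam x)
    {s j c : ℕ} (hj : (s, j) ∈ insert x (nu \ lam)) (hc : (s + 1, c) ∈ nu \ lam)
    (hjc : j ≤ c) : (s + 1, j) ∈ nu \ lam := by
  have hnu' : (s + 1, j) ∈ nu := young_left hnu (Finset.mem_sdiff.1 hc).1 j hjc
  refine Finset.mem_sdiff.2 ⟨hnu', ?_⟩
  intro hl
  have hup : (s, j) ∈ lam := hlam.1 s j hl
  rcases Finset.mem_insert.1 hj with h | h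
  · -- (s,j) = x, so (s+1,j) = (x.1+1, x.2) ∉ lam
    have e1 : s = x.1 := by rw [← h]
    have e2 : j = x.2 := by rw [← h]
    exact hx.2.1 (by rw [← e1, ← e2] at *; exact hl)
  · exact (Finset.mem_sdiff.1 h).2 hup

/-- The box above a skew box strictly right of the hole's column. -/
lemma above_mem {lam nu : Finset Box} {x : Box}
    (hlam : IsYoung lam) (hnu : IsYoung nu) (hx : InnerCorner lam x)
    {s j c : ℕ} (hj : (s + 1, j) ∈ nu \ lam) (hc : (s, c) ∈ insert x (nu \ lam))
    (hcj : c < j) : (s, j) ∈ nu \ lam := by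
  have hnu' : (s, j) ∈ nu := hnu.1 s j (Finset.mem_sdiff.1 hj).1
  refine Finset.mem_sdiff.2 ⟨hnu', ?_⟩
  intro hl
  have hcl : (s, c) ∈ lam := young_left hlam hl c (by omega)
  rcases Finset.mem_insert.1 hc with h | h
  · have e1 : s = x.1 := by rw [← h]
    have e2 : c = x.2 := by rw [← h]
    have : (s, c + 1) ∈ lam := young_left hlam hl (c+1) (by omega)
    exact hx.2.2 (by rw [← e1, ← e2] at *; exact this)
  · exact (Finset.mem_sdiff.1 h).2 hcl

end Stmt19Aux3
section Stmt19Aux4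

lemma rb_mk {a1 a2 b1 b2 : ℕ} :
    ReadBefore (a1, a2) (b1, b2) ↔ (b1 < a1 ∨ (a1 = b1 ∧ a2 < b2)) := Iff.rfl

lemma LIS_moveDown {lam nu : Finset Box} {x : Box} {D : Finset Box} {g : Box → ℕ}
    {r c : ℕ}
    (hlam : IsYoung lam) (hnu : IsYoung nu) (hx : InnerCorner lam x)
    (hhD : ((r, c) : Box) ∉ D) (hins : insert ((r, c) : Box) D = insert x (nu \ lam))
    (hx1 : x.1 ≤ r)
    (inc : IncreasingOn D g) (hinj : ∀ a ∈ D, ∀ b ∈ D, g a = g b → a = b)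
    (hdown : ((r + 1, c) : Box) ∈ D)
    (hright : ((r, c + 1) : Box) ∈ D → g (r + 1, c) < g (r, c + 1)) :
    LIS (insert (r, c) (D.erase (r + 1, c))) (Function.update g (r, c) (g (r + 1, c)))
      = LIS D g := by
  set v := g (r + 1, c) with hv
  set g' := Function.update g (r, c) v with hg'
  set D' := insert ((r, c) : Box) (D.erase (r + 1, c)) with hD'
  have g'val : ∀ u : Box, u ≠ (r, c) → g' u = g u := by
    intro u hu; simp [hg', Function.update_of_ne hu]
  have g'hole : g' (r, c) = v := by simp [hg']
  have memA : ∀ b ∈ D, b ∈ insert x (nu \ lam) := by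
    intro b hb; rw [← hins]; exact Finset.mem_insert_of_mem hb
  have memD : ∀ b ∈ insert x (nu \ lam), b ≠ ((r, c) : Box) → b ∈ D := by
    intro b hb hbne; rw [← hins] at hb
    exact (Finset.mem_insert.1 hb).resolve_left hbne
  have hrcA : ((r, c) : Box) ∈ insert x (nu \ lam) := by
    rw [← hins]; exact Finset.mem_insert_self _ _
  have skew1 : ∀ j : ℕ, ((r + 1, j) : Box) ∈ D → ((r + 1, j) : Box) ∈ nu \ lam := by
    intro j hj
    rcases Finset.mem_insert.1 (memA _ hj) with h | h
    · exfalso; have := congrArg Prod.fst h; simp at this; omega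
    · exact h
  have rowD : ∀ s j1 j2 i : ℕ, ((s, j1) : Box) ∈ insert x (nu \ lam) →
      ((s, j2) : Box) ∈ insert x (nu \ lam) → j1 ≤ i → i ≤ j2 →
      ((s, i) : Box) ≠ ((r, c) : Box) → ((s, i) : Box) ∈ D := by
    intro s j1 j2 i h1 h2 h3 h4 h5
    exact memD _ (row_interval hlam hnu hx h1 h2 h3 h4) h5
  have chain1 : ∀ j1 j2 : ℕ, j1 < j2 → ((r + 1, j1) : Box) ∈ D →
      ((r + 1, j2) : Box) ∈ D → g (r + 1, j1) < g (r + 1, j2) := by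
    intro j1 j2 h12 h1 h2
    exact row_chain_lt inc h12 (fun i hi1 hi2 =>
      rowD (r + 1) j1 j2 i (memA _ h1) (memA _ h2) hi1 hi2
        (by simp [Prod.ext_iff]))
  have chainR : ∀ j1 j2 : ℕ, c < j1 → j1 < j2 → ((r, j1) : Box) ∈ D →
      ((r, j2) : Box) ∈ D → g (r, j1) < g (r, j2) := by
    intro j1 j2 hc1 h12 h1 h2
    exact row_chain_lt inc h12 (fun i hi1 hi2 =>
      rowD r j1 j2 i (memA _ h1) (memA _ h2) hi1 hi2
        (by simp [Prod.ext_iff]; omega))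
  have hE : ∀ j : ℕ, c < j → ((r, j) : Box) ∈ D → v < g (r, j) := by
    intro j hj hjD
    have hc1 : ((r, c + 1) : Box) ∈ D :=
      rowD r c j (c + 1) hrcA (memA _ hjD) (by omega) (by omega)
        (by simp [Prod.ext_iff])
    have h1 : v < g (r, c + 1) := hright hc1
    have h2 : g (r, c + 1) ≤ g (r, j) :=
      row_chain_le inc (by omega : c + 1 ≤ j) (fun i hi1 hi2 =>
        rowD r (c + 1) j i (memA _ hc1) (memA _ hjD) hi1 hi2
          (by simp [Prod.ext_iff]; omega))
    omega
  have hvup : ∀ j : ℕ, c < j → ((r + 1, j) : Box) ∈ D → v < g (r + 1, j) :=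
    fun j hj hd => chain1 c j hj hdown hd
  have hvdl : ∀ j : ℕ, j < c → ((r + 1, j) : Box) ∈ D → g (r + 1, j) < v :=
    fun j hj hd => chain1 j c hj hd hdown
  have hAboveMem : ∀ j : ℕ, c < j → ((r + 1, j) : Box) ∈ D → ((r, j) : Box) ∈ D := by
    intro j hj hd
    have h2 := above_mem hlam hnu hx (skew1 j hd) hrcA hj
    exact memD _ (Finset.mem_insert_of_mem h2) (by simp [Prod.ext_iff]; omega)
  have hBelowMem : ∀ j : ℕ, j < c → ((r, j) : Box) ∈ D → ((r + 1, j) : Box) ∈ D := by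
    intro j hj hd
    have h1 := below_mem hlam hnu hx (memA _ hd) (skew1 c hdown) (le_of_lt hj)
    exact memD _ (Finset.mem_insert_of_mem h1) (by simp [Prod.ext_iff])
  have hC : ∀ j : ℕ, j < c → ((r, j) : Box) ∈ D → g (r, j) < v := by
    intro j hj hd
    have h1 : ((r + 1, j) : Box) ∈ D := hBelowMem j hj hd
    have h2 : g (r, j) < g (r + 1, j) := inc.2 r j hd h1
    have h3 : g (r + 1, j) < v := hvdl j hj h1
    omega
  have hCol : ∀ j : ℕ, ((r, j) : Box) ∈ D → ((r + 1, j) : Box) ∈ D →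
      g (r, j) < g (r + 1, j) := fun j => inc.2 r j
  apply le_antisymm
  · -- LIS D' g' ≤ LIS D g
    apply chain_mono
    intro J hJ hJc
    have hJmem : ∀ u ∈ J, u ≠ ((r, c) : Box) → u ∈ D ∧ u ≠ ((r + 1, c) : Box) := by
      intro u hu hune
      rcases Finset.mem_insert.1 (hJ hu) with h | h
      · exact absurd h hune
      · exact ⟨Finset.mem_of_mem_erase h, Finset.ne_of_mem_erase h⟩
    by_cases hhole : ((r, c) : Box) ∈ J
    · have nB : ∀ u ∈ J, u.1 = r + 1 → c < u.2 → False := by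
        intro u hu h1 h2
        have hune : u ≠ ((r, c) : Box) := by
          intro h; rw [h] at h1; simp at h1
        have huD := (hJmem u hu hune).1
        obtain ⟨u1, u2⟩ := u
        simp only at h1 h2; subst h1
        have hrb : ReadBefore ((r + 1, u2) : Box) ((r, c) : Box) := by
          rw [rb_mk]; omega
        have h3 := hJc _ hu _ hhole hrb
        rw [g'hole, g'val _ hune] at h3
        have := hvup u2 h2 huD
        omega
      classical
      set Ψ : Box → Box := fun b =>
        if b = ((r, c) : Box) then (r + 1, c)
        else if b.1 = r ∧ b.2 < c then (r + 1, b.2) else b with hΨ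
      -- classification of elements of J
      have classJ : ∀ p ∈ J, (p = ((r, c) : Box) ∧ Ψ p = ((r + 1, c) : Box)) ∨
          (∃ j, j < c ∧ p = ((r, j) : Box) ∧ ((r, j) : Box) ∈ D ∧
            ((r + 1, j) : Box) ∈ D ∧ Ψ p = ((r + 1, j) : Box)) ∨
          (p ∈ D ∧ p ≠ ((r + 1, c) : Box) ∧ p ≠ ((r, c) : Box) ∧
            ¬(p.1 = r ∧ p.2 < c) ∧ ¬(p.1 = r + 1 ∧ c < p.2) ∧ Ψ p = p) := by
        intro p hp
        by_cases h1 : p = ((r, c) : Box)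
        · left; exact ⟨h1, by simp [hΨ, h1]⟩
        · obtain ⟨hpD, hpv⟩ := hJmem p hp h1
          by_cases h2 : p.1 = r ∧ p.2 < c
          · right; left
            obtain ⟨p1, p2⟩ := p
            simp only at h2
            obtain ⟨e1, e2⟩ := h2
            have hpD2 : ((r, p2) : Box) ∈ D := e1 ▸ hpD
            refine ⟨p2, e2, by rw [e1], hpD2, hBelowMem p2 e2 hpD2, ?_⟩
            show (if ((p1, p2) : Box) = ((r, c) : Box) then ((r + 1, c) : Box)
              else if (p1, p2).1 = r ∧ (p1, p2).2 < c then ((r + 1, (p1, p2).2) : Box)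
              else (p1, p2)) = ((r + 1, p2) : Box)
            rw [if_neg h1, if_pos (⟨e1, e2⟩ : (p1, p2).1 = r ∧ (p1, p2).2 < c)]
          · right; right
            refine ⟨hpD, hpv, h1, h2, ?_, by simp [hΨ, if_neg h1, if_neg h2]⟩
            intro h3
            exact nB p hp h3.1 h3.2
      refine ⟨J.image Ψ, ?_, ?_, ?_⟩
      · intro a ha
        obtain ⟨p, hp, rfl⟩ := Finset.mem_image.1 ha
        rcases classJ p hp with ⟨_, hq⟩ | ⟨j, _, _, _, hm, hq⟩ | ⟨hpD, _, _, _, _, hq⟩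
        · rw [hq]; exact hdown
        · rw [hq]; exact hm
        · rw [hq]; exact hpD
      · -- chain property
        intro a ha b hb hrb
        obtain ⟨p, hp, rfl⟩ := Finset.mem_image.1 ha
        obtain ⟨q, hq, rfl⟩ := Finset.mem_image.1 hb
        rcases classJ p hp with ⟨hpe, hpq⟩ | ⟨j, hjc, hpe, hpD, hpD2, hpq⟩ |
            ⟨hpD, hpv, hpc, hpr, hpr2, hpq⟩ <;>
          rcases classJ q hq with ⟨hqe, hqq⟩ | ⟨k, hkc, hqe, hqD, hqD2, hqq⟩ |
            ⟨hqD, hqv, hqc, hqr, hqr2, hqq⟩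
        · rw [hpq, hqq] at hrb; exact absurd hrb (rb_irrefl _)
        · -- H, M : ReadBefore (r+1,c) (r+1,k) with k < c: impossible
          rw [hpq, hqq] at hrb; rw [rb_mk] at hrb; omega
        · -- H, U
          rw [hpq, hqq] at hrb ⊢
          obtain ⟨q1, q2⟩ := q
          simp only at hqr hqr2
          rw [rb_mk] at hrb
          have hq1 : q1 ≤ r := by
            rcases hrb with h | h
            · omega
            · exfalso; exact hqr2 ⟨by omega, by omega⟩
          have hrb2 : ReadBefore ((r, c) : Box) ((q1, q2) : Box) := by
            rw [rb_mk]
            rcases Nat.lt_or_ge q1 r with h | h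
            · left; exact h
            · have e : q1 = r := by omega
              right
              refine ⟨e.symm, ?_⟩
              have h1 : ¬ q2 < c := fun hlt => hqr ⟨e, hlt⟩
              have h2 : q2 ≠ c := fun he => hqc (by rw [e, he])
              omega
          have h3 := hJc _ hhole _ hq hrb2
          rw [g'hole, g'val _ hqc] at h3
          exact h3
        · -- M, H : goal g (r+1,j) < v
          rw [hpq, hqq]
          exact hvdl j hjc hpD2
        · -- M, M
          rw [hpq, hqq] at hrb ⊢
          rw [rb_mk] at hrb
          have : j < k := by omega
          exact chain1 j k this hpD2 hqD2
        · -- M, U : goal g (r+1,j) < g q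
          rw [hpq, hqq] at hrb ⊢
          obtain ⟨q1, q2⟩ := q
          simp only at hqr hqr2
          rw [rb_mk] at hrb
          rcases hrb with h | h
          · -- q1 < r + 1
            rcases Nat.lt_or_ge q1 r with h2 | h2
            · -- q1 < r : use hole
              have hrb2 : ReadBefore ((r, c) : Box) ((q1, q2) : Box) := by
                rw [rb_mk]; omega
              have h3 := hJc _ hhole _ hq hrb2
              rw [g'hole, g'val _ hqc] at h3
              have := hvdl j hjc hpD2
              omega
            · -- q1 = r, q2 > c
              have e : q1 = r := by omega
              have h1 : ¬ q2 < c := fun hlt => hqr ⟨e, hlt⟩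
              have h2 : q2 ≠ c := fun he => hqc (by rw [e, he])
              have hrb2 : ReadBefore ((r, c) : Box) ((q1, q2) : Box) := by
                rw [rb_mk]; omega
              have h3 := hJc _ hhole _ hq hrb2
              rw [g'hole, g'val _ hqc] at h3
              have := hvdl j hjc hpD2
              omega
          · -- q1 = r+1, j < q2
            have e : q1 = r + 1 := by omega
            have h1 : ¬ c < q2 := fun hlt => hqr2 ⟨e, hlt⟩
            have h2 : q2 ≠ c := by
              intro he; exact hqv (by rw [e, he])
            have hq2 : q2 < c := by omega
            obtain rfl : q1 = r + 1 := e
            exact chain1 j q2 (by omega) hpD2 hqD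
        · -- U, H : goal g p < v
          rw [hpq, hqq] at hrb ⊢
          obtain ⟨p1, p2⟩ := p
          simp only at hpr hpr2
          rw [rb_mk] at hrb
          rcases hrb with h | h
          · -- r + 1 < p1
            have hrb2 : ReadBefore ((p1, p2) : Box) ((r, c) : Box) := by
              rw [rb_mk]; omega
            have h3 := hJc _ hp _ hhole hrb2
            rw [g'hole, g'val _ hpc] at h3
            exact h3
          · -- p1 = r+1, p2 < c
            have e : p1 = r + 1 := by omega
            obtain rfl : p1 = r + 1 := e
            exact hvdl p2 (by omega) hpD
        · -- U, M : goal g p < g (r+1,k)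
          rw [hpq, hqq] at hrb ⊢
          obtain ⟨p1, p2⟩ := p
          simp only at hpr hpr2
          rw [rb_mk] at hrb
          rcases hrb with h | h
          · -- r + 1 < p1 : use (r,k) = q origin
            have hrb2 : ReadBefore ((p1, p2) : Box) ((r, k) : Box) := by
              rw [rb_mk]; omega
            have h3 := hJc _ hp _ hq (by rw [hqe]; exact hrb2)
            rw [hqe] at h3
            rw [g'val _ hpc,
              g'val _ (show ((r, k) : Box) ≠ ((r, c) : Box) by
                simp [Prod.ext_iff]; omega)] at h3
            have h4 := hCol k hqD hqD2
            omega
          · -- p1 = r+1, p2 < k < c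
            have e : p1 = r + 1 := by omega
            obtain rfl : p1 = r + 1 := e
            exact chain1 p2 k (by omega) hpD hqD2
        · -- U, U
          rw [hpq, hqq] at hrb ⊢
          have h3 := hJc _ hp _ hq hrb
          rwa [g'val _ hpc, g'val _ hqc] at h3
      · -- cardinality
        rw [Finset.card_image_of_injOn]
        intro p hp q hq hpq
        rcases classJ p hp with ⟨hpe, hpq1⟩ | ⟨j, hjc, hpe, hpD, hpD2, hpq1⟩ |
            ⟨hpD, hpv, hpc, hpr, hpr2, hpq1⟩ <;>
          rcases classJ q hq with ⟨hqe, hqq1⟩ | ⟨k, hkc, hqe, hqD, hqD2, hqq1⟩ |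
            ⟨hqD, hqv, hqc, hqr, hqr2, hqq1⟩
        · rw [hpe, hqe]
        · exfalso; rw [hpq1, hqq1] at hpq
          have := congrArg Prod.snd hpq; simp at this; omega
        · exfalso; rw [hpq1, hqq1] at hpq; exact hqv hpq.symm
        · exfalso; rw [hpq1, hqq1] at hpq
          have := congrArg Prod.snd hpq; simp at this; omega
        · rw [hpq1, hqq1] at hpq
          have := congrArg Prod.snd hpq; simp at this
          rw [hpe, hqe, this]
        · -- M, U collision : q = (r+1,j), p = (r,j)
          exfalso
          rw [hpq1, hqq1] at hpq
          have hqe2 : q = ((r + 1, j) : Box) := hpq.symm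
          have hrb : ReadBefore q p := by
            rw [hqe2, hpe, rb_mk]; omega
          have h3 := hJc _ hq _ hp hrb
          rw [hqe2, hpe] at h3
          rw [g'val _ (by simp [Prod.ext_iff]), g'val _ (by simp [Prod.ext_iff]; omega)] at h3
          have := hCol j hpD hpD2
          omega
        · exfalso; rw [hpq1, hqq1] at hpq; exact hpv hpq
        · -- U, M collision : p = (r+1,k), q = (r,k)
          exfalso
          rw [hpq1, hqq1] at hpq
          have hpe2 : p = ((r + 1, k) : Box) := hpq
          have hrb : ReadBefore p q := by
            rw [hpe2, hqe, rb_mk]; omega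
          have h3 := hJc _ hp _ hq hrb
          rw [hpe2, hqe] at h3
          rw [g'val _ (by simp [Prod.ext_iff]), g'val _ (by simp [Prod.ext_iff]; omega)] at h3
          have := hCol k hqD hqD2
          omega
        · rw [hpq1, hqq1] at hpq; exact hpq
    · -- hole not used : identity chain
      refine ⟨J, ?_, ?_, le_refl _⟩
      · intro u hu
        exact (hJmem u hu (fun h => hhole (h ▸ hu))).1
      · intro a ha b hb hrb
        have h3 := hJc a ha b hb hrb
        rwa [g'val _ (fun h => hhole (h ▸ ha)), g'val _ (fun h => hhole (h ▸ hb))] at h3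
  · -- LIS D g ≤ LIS D' g'
    apply chain_mono
    intro I hI hIc
    by_cases hvin : ((r + 1, c) : Box) ∈ I
    · have nC : ∀ u ∈ I, u.1 = r → u.2 < c → False := by
        intro u hu h1 h2
        obtain ⟨u1, u2⟩ := u
        simp only at h1 h2
        have hrb : ReadBefore ((r + 1, c) : Box) ((u1, u2) : Box) := by
          rw [rb_mk]; omega
        have h3 := hIc _ hvin _ hu hrb
        have h4 := hC u2 h2 (h1 ▸ hI hu)
        rw [h1] at h3
        omega
      classical
      set Φ : Box → Box := fun b =>
        if b = ((r + 1, c) : Box) then (r, c)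
        else if b.1 = r + 1 ∧ c < b.2 then (r, b.2) else b with hΦ
      have classI : ∀ p ∈ I, (p = ((r + 1, c) : Box) ∧ Φ p = ((r, c) : Box)) ∨
          (∃ j, c < j ∧ p = ((r + 1, j) : Box) ∧ ((r + 1, j) : Box) ∈ D ∧
            ((r, j) : Box) ∈ D ∧ Φ p = ((r, j) : Box)) ∨
          (p ∈ D ∧ p ≠ ((r + 1, c) : Box) ∧
            ¬(p.1 = r + 1 ∧ c < p.2) ∧ ¬(p.1 = r ∧ p.2 < c) ∧ Φ p = p) := by
        intro p hp
        by_cases h1 : p = ((r + 1, c) : Box)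
        · left; exact ⟨h1, by simp [hΦ, h1]⟩
        · by_cases h2 : p.1 = r + 1 ∧ c < p.2
          · right; left
            obtain ⟨p1, p2⟩ := p
            simp only at h2
            obtain ⟨e1, e2⟩ := h2
            have hpD2 : ((r + 1, p2) : Box) ∈ D := e1 ▸ hI hp
            refine ⟨p2, e2, by rw [e1], hpD2, hAboveMem p2 e2 hpD2, ?_⟩
            show (if ((p1, p2) : Box) = ((r + 1, c) : Box) then ((r, c) : Box)
              else if (p1, p2).1 = r + 1 ∧ c < (p1, p2).2 then ((r, (p1, p2).2) : Box)
              else (p1, p2)) = ((r, p2) : Box)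
            rw [if_neg h1, if_pos (⟨e1, e2⟩ : (p1, p2).1 = r + 1 ∧ c < (p1, p2).2)]
          · right; right
            refine ⟨hI hp, h1, h2, ?_, by simp [hΦ, if_neg h1, if_neg h2]⟩
            intro h3
            exact nC p hp h3.1 h3.2
      refine ⟨I.image Φ, ?_, ?_, ?_⟩
      · intro a ha
        obtain ⟨p, hp, rfl⟩ := Finset.mem_image.1 ha
        rcases classI p hp with ⟨_, hq⟩ | ⟨j, hjc, _, _, hm, hq⟩ | ⟨hpD, hpv, _, _, hq⟩
        · rw [hq]; exact Finset.mem_insert_self _ _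
        · rw [hq]
          refine Finset.mem_insert_of_mem (Finset.mem_erase.2 ⟨?_, hm⟩)
          simp [Prod.ext_iff]
        · rw [hq]
          exact Finset.mem_insert_of_mem (Finset.mem_erase.2 ⟨hpv, hpD⟩)
      · -- chain property for g'
        intro a ha b hb hrb
        obtain ⟨p, hp, rfl⟩ := Finset.mem_image.1 ha
        obtain ⟨q, hq, rfl⟩ := Finset.mem_image.1 hb
        rcases classI p hp with ⟨hpe, hpq⟩ | ⟨j, hjc, hpe, hpD, hpD2, hpq⟩ |
            ⟨hpD, hpv, hpr, hpr2, hpq⟩ <;>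
          rcases classI q hq with ⟨hqe, hqq⟩ | ⟨k, hkc, hqe, hqD, hqD2, hqq⟩ |
            ⟨hqD, hqv, hqr, hqr2, hqq⟩
        · rw [hpq, hqq] at hrb; exact absurd hrb (rb_irrefl _)
        · -- V, M : goal v < g (r,k)
          rw [hpq, hqq] at hrb ⊢
          rw [g'hole, g'val _ (by simp [Prod.ext_iff]; omega)]
          exact hE k hkc hqD2
        · -- V, U
          rw [hpq, hqq] at hrb ⊢
          obtain ⟨q1, q2⟩ := q
          rw [rb_mk] at hrb
          have hrb2 : ReadBefore ((r + 1, c) : Box) ((q1, q2) : Box) := by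
            rw [rb_mk]; omega
          have h3 := hIc _ hvin _ hq hrb2
          rw [g'hole, g'val _ (fun h => hhD (h ▸ hqD))]
          exact h3
        · -- M, V : impossible
          rw [hpq, hqq] at hrb; rw [rb_mk] at hrb; omega
        · -- M, M
          rw [hpq, hqq] at hrb ⊢
          rw [rb_mk] at hrb
          rw [g'val _ (by simp [Prod.ext_iff]; omega), g'val _ (by simp [Prod.ext_iff]; omega)]
          exact chainR j k hjc (by omega) hpD2 hqD2
        · -- M, U : goal g' (r,j) < g' q
          rw [hpq, hqq] at hrb ⊢
          obtain ⟨q1, q2⟩ := q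
          simp only at hqr hqr2
          rw [rb_mk] at hrb
          rw [g'val _ (by simp [Prod.ext_iff]; omega), g'val _ (fun h => hhD (h ▸ hqD))]
          rcases hrb with h | h
          · -- q1 < r : use origin (r+1,j)
            have hrb2 : ReadBefore ((r + 1, j) : Box) ((q1, q2) : Box) := by
              rw [rb_mk]; omega
            have h3 := hIc _ hp _ hq (by rw [hpe]; exact hrb2)
            rw [hpe] at h3
            have h4 := hCol j hpD2 hpD
            omega
          · -- q1 = r, j < q2
            have e : q1 = r := by omega
            obtain rfl : q1 = r := e
            exact chainR j q2 hjc (by omega) hpD2 hqD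
        · -- U, V : goal g' p < v
          rw [hpq, hqq] at hrb ⊢
          obtain ⟨p1, p2⟩ := p
          simp only at hpr hpr2
          rw [rb_mk] at hrb
          rw [g'hole, g'val _ (fun h => hhD (h ▸ hpD))]
          rcases hrb with h | h
          · -- r < p1
            have hp1 : p1 ≠ r + 1 ∨ p2 < c := by
              by_cases e : p1 = r + 1
              · right
                have h1 : ¬ c < p2 := fun hlt => hpr ⟨e, hlt⟩
                have h2 : p2 ≠ c := fun he => hpv (by rw [e, he])
                omega
              · left; exact e
            have hrb2 : ReadBefore ((p1, p2) : Box) ((r + 1, c) : Box) := by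
              rw [rb_mk]
              rcases hp1 with h1 | h1
              · left; omega
              · rcases Nat.lt_or_ge (r+1) p1 with h2 | h2
                · left; exact h2
                · right; exact ⟨by omega, h1⟩
            exact hIc _ hp _ hvin hrb2
          · -- p1 = r, p2 < c : nC contradiction
            exfalso
            exact nC ((p1, p2) : Box) hp (show (p1, p2).1 = r by simp only; omega)
              (show (p1, p2).2 < c by simp only; omega)
        · -- U, M : goal g' p < g' (r,k)
          rw [hpq, hqq] at hrb ⊢
          obtain ⟨p1, p2⟩ := p
          simp only at hpr hpr2
          rw [rb_mk] at hrb
          rw [g'val _ (fun h => hhD (h ▸ hpD)), g'val _ (by simp [Prod.ext_iff]; omega)]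
          rcases hrb with h | h
          · -- r < p1
            rcases Nat.lt_or_ge (r + 1) p1 with h2 | h2
            · -- p1 ≥ r+2 : via v
              have hrb2 : ReadBefore ((p1, p2) : Box) ((r + 1, c) : Box) := by
                rw [rb_mk]; omega
              have h3 := hIc _ hp _ hvin hrb2
              have h4 := hE k hkc hqD2
              omega
            · -- p1 = r + 1
              have e : p1 = r + 1 := by omega
              have h1 : ¬ c < p2 := fun hlt => hpr ⟨e, hlt⟩
              have h2 : p2 ≠ c := fun he => hpv (by rw [e, he])
              have hrb2 : ReadBefore ((p1, p2) : Box) ((r + 1, c) : Box) := by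
                rw [rb_mk]; omega
              have h3 := hIc _ hp _ hvin hrb2
              have h4 := hE k hkc hqD2
              omega
          · -- p1 = r, p2 < k
            have e : p1 = r := by omega
            have h1 : ¬ p2 < c := fun hlt =>
              nC ((p1, p2) : Box) hp (show (p1, p2).1 = r by simp only; omega) hlt
            have h2 : p2 ≠ c := by
              intro he
              exact hhD (by rw [← e, ← he]; exact hpD)
            obtain rfl : p1 = r := e
            exact chainR p2 k (by omega) (by omega) hpD hqD2
        · -- U, U
          rw [hpq, hqq] at hrb ⊢
          have h3 := hIc _ hp _ hq hrb
          rwa [g'val _ (fun h => hhD (h ▸ hpD)), g'val _ (fun h => hhD (h ▸ hqD))]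
      · -- cardinality
        rw [Finset.card_image_of_injOn]
        intro p hp q hq hpq
        rcases classI p hp with ⟨hpe, hpq1⟩ | ⟨j, hjc, hpe, hpD, hpD2, hpq1⟩ |
            ⟨hpD, hpv, hpr, hpr2, hpq1⟩ <;>
          rcases classI q hq with ⟨hqe, hqq1⟩ | ⟨k, hkc, hqe, hqD, hqD2, hqq1⟩ |
            ⟨hqD, hqv, hqr, hqr2, hqq1⟩
        · rw [hpe, hqe]
        · exfalso; rw [hpq1, hqq1] at hpq
          have := congrArg Prod.snd hpq; simp at this; omega
        · exfalso; rw [hpq1, hqq1] at hpq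
          exact hhD (hpq ▸ hqD)
        · exfalso; rw [hpq1, hqq1] at hpq
          have := congrArg Prod.snd hpq; simp at this; omega
        · rw [hpq1, hqq1] at hpq
          have := congrArg Prod.snd hpq; simp at this
          rw [hpe, hqe, this]
        · -- M, U collision : q = (r,j), p = (r+1,j)
          exfalso
          rw [hpq1, hqq1] at hpq
          have hqe2 : q = ((r, j) : Box) := hpq.symm
          have hrb : ReadBefore p q := by
            rw [hqe2, hpe, rb_mk]; omega
          have h3 := hIc _ hp _ hq hrb
          rw [hqe2, hpe] at h3
          have := hCol j hpD2 hpD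
          omega
        · exfalso; rw [hpq1, hqq1] at hpq
          exact hhD (hpq.symm ▸ hpD)
        · -- U, M collision : p = (r,k), q = (r+1,k)
          exfalso
          rw [hpq1, hqq1] at hpq
          have hpe2 : p = ((r, k) : Box) := hpq
          have hrb : ReadBefore q p := by
            rw [hpe2, hqe, rb_mk]; omega
          have h3 := hIc _ hq _ hp hrb
          rw [hpe2, hqe] at h3
          have := hCol k hqD2 hqD
          omega
        · rw [hpq1, hqq1] at hpq; exact hpq
    · -- vbox not used : identity chain
      refine ⟨I, ?_, ?_, le_refl _⟩
      · intro u hu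
        exact Finset.mem_insert_of_mem
          (Finset.mem_erase.2 ⟨fun h => hvin (h ▸ hu), hI hu⟩)
      · intro a ha b hb hrb
        have h3 := hIc a ha b hb hrb
        rwa [g'val _ (fun h => hhD (h ▸ hI ha)), g'val _ (fun h => hhD (h ▸ hI hb))]

end Stmt19Aux4
section Stmt19Aux5

lemma box_ne {a1 a2 b1 b2 : ℕ} (h : ¬(a1 = b1 ∧ a2 = b2)) :
    ((a1, a2) : Box) ≠ ((b1, b2) : Box) := by
  intro he
  exact h ⟨congrArg Prod.fst he, congrArg Prod.snd he⟩

lemma Inv_moveDown {lam nu : Finset Box} {x : Box} {D : Finset Box} {g : Box → ℕ}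
    {r c : ℕ}
    (hlam : IsYoung lam) (hnu : IsYoung nu) (hx : InnerCorner lam x)
    (hhD : ((r, c) : Box) ∉ D) (hins : insert ((r, c) : Box) D = insert x (nu \ lam))
    (hx1 : x.1 ≤ r) (hx2 : x.2 ≤ c)
    (inc : IncreasingOn D g) (hinj : ∀ a ∈ D, ∀ b ∈ D, g a = g b → a = b)
    (hax : ∀ rr : ℕ, rr + 1 = r → ((rr, c) : Box) ∈ D → ((r + 1, c) : Box) ∈ D →
      g (rr, c) < g (r + 1, c))
    (hdown : ((r + 1, c) : Box) ∈ D)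
    (hright : ((r, c + 1) : Box) ∈ D → g (r + 1, c) < g (r, c + 1)) :
    SlideInv lam nu x (insert (r, c) (D.erase (r + 1, c)))
      (Function.update g (r, c) (g (r + 1, c))) (r + 1, c) := by
  set v := g (r + 1, c) with hv
  set g' := Function.update g (r, c) v with hg'
  set D' := insert ((r, c) : Box) (D.erase (r + 1, c)) with hD'
  have g'val : ∀ u : Box, u ≠ (r, c) → g' u = g u := by
    intro u hu; simp [hg', Function.update_of_ne hu]
  have g'hole : g' (r, c) = v := by simp [hg']
  have memA : ∀ b ∈ D, b ∈ insert x (nu \ lam) := by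
    intro b hb; rw [← hins]; exact Finset.mem_insert_of_mem hb
  have memD : ∀ b ∈ insert x (nu \ lam), b ≠ ((r, c) : Box) → b ∈ D := by
    intro b hb hbne; rw [← hins] at hb
    exact (Finset.mem_insert.1 hb).resolve_left hbne
  have skew1 : ∀ j : ℕ, ((r + 1, j) : Box) ∈ D → ((r + 1, j) : Box) ∈ nu \ lam := by
    intro j hj
    rcases Finset.mem_insert.1 (memA _ hj) with h | h
    · exfalso; have := congrArg Prod.fst h; simp at this; omega
    · exact h
  have hD'mem : ∀ u ∈ D', u ≠ ((r, c) : Box) → u ∈ D ∧ u ≠ ((r + 1, c) : Box) := by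
    intro u hu hune
    rcases Finset.mem_insert.1 hu with h | h
    · exact absurd h hune
    · exact ⟨Finset.mem_of_mem_erase h, Finset.ne_of_mem_erase h⟩
  have hnotv : ((r + 1, c) : Box) ∉ D' := by
    intro h
    rcases Finset.mem_insert.1 h with h | h
    · have := congrArg Prod.fst h; simp at this
    · exact (Finset.notMem_erase _ _) h
  have hrcD' : ((r, c) : Box) ∈ D' := Finset.mem_insert_self _ _
  refine ⟨hnotv, ?_, by simp; omega, by simpa using hx2, ⟨?_, ?_⟩, ?_, ?_, ?_⟩
  · -- shape
    rw [hD', Finset.insert_comm _ _ _, Finset.insert_erase hdown, hins]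
  · -- rows increasing
    intro s j hA hB
    by_cases e1 : ((s, j) : Box) = ((r, c) : Box)
    · have es : s = r := congrArg Prod.fst e1
      have ej : j = c := congrArg Prod.snd e1
      have hB' : ((r, c + 1) : Box) ∈ D' := by rw [← es, ← ej]; exact hB
      obtain ⟨hBD, _⟩ := hD'mem _ hB' (box_ne (by omega))
      show g' (s, j) < g' (s, j + 1)
      rw [e1, show ((s, j + 1) : Box) = ((r, c + 1) : Box) by rw [es, ej], g'hole,
        g'val _ (box_ne (by omega))]
      exact hright hBD
    · by_cases e2 : ((s, j + 1) : Box) = ((r, c) : Box)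
      · have es : s = r := congrArg Prod.fst e2
        have ej : j + 1 = c := congrArg Prod.snd e2
        obtain ⟨hAD, _⟩ := hD'mem _ hA e1
        have hAD' : ((r, j) : Box) ∈ D := by rw [← es]; exact hAD
        rw [e2, g'hole, g'val _ e1]
        have h1 : ((r + 1, j) : Box) ∈ nu \ lam :=
          below_mem hlam hnu hx (memA _ hAD') (skew1 c hdown) (by omega)
        have h2 : ((r + 1, j) : Box) ∈ D :=
          memD _ (Finset.mem_insert_of_mem h1) (box_ne (by omega))
        have h3 := inc.2 r j hAD' h2
        have h4 : g (r + 1, j) < g (r + 1, j + 1) := inc.1 (r + 1) j h2 (by rw [ej]; exact hdown)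
        rw [ej] at h4
        have h5 : g (s, j) = g (r, j) := by rw [es]
        omega
      · obtain ⟨hAD, _⟩ := hD'mem _ hA e1
        obtain ⟨hBD, _⟩ := hD'mem _ hB e2
        rw [g'val _ e1, g'val _ e2]
        exact inc.1 s j hAD hBD
  · -- columns increasing
    intro s j hA hB
    by_cases e1 : ((s, j) : Box) = ((r, c) : Box)
    · exfalso
      have es : s = r := congrArg Prod.fst e1
      have ej : j = c := congrArg Prod.snd e1
      exact hnotv (by rw [← es, ← ej]; exact hB)
    · by_cases e2 : ((s + 1, j) : Box) = ((r, c) : Box)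
      · have es : s + 1 = r := congrArg Prod.fst e2
        have ej : j = c := congrArg Prod.snd e2
        obtain ⟨hAD, _⟩ := hD'mem _ hA e1
        rw [e2, g'hole, g'val _ e1]
        have hAD' : ((s, c) : Box) ∈ D := by rw [← ej]; exact hAD
        have := hax s es hAD' hdown
        have h5 : g (s, j) = g (s, c) := by rw [ej]
        omega
      · obtain ⟨hAD, _⟩ := hD'mem _ hA e1
        obtain ⟨hBD, _⟩ := hD'mem _ hB e2
        rw [g'val _ e1, g'val _ e2]
        exact inc.2 s j hAD hBD
  · -- injectivity
    intro a ha b hb hab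
    by_cases e1 : a = ((r, c) : Box) <;> by_cases e2 : b = ((r, c) : Box)
    · rw [e1, e2]
    · exfalso
      obtain ⟨hbD, hbv⟩ := hD'mem _ hb e2
      rw [e1, g'hole, g'val _ e2] at hab
      exact hbv (hinj _ hdown _ hbD hab).symm
    · exfalso
      obtain ⟨haD, hav⟩ := hD'mem _ ha e1
      rw [e2, g'hole, g'val _ e1] at hab
      exact hav (hinj _ haD _ hdown hab)
    · obtain ⟨haD, _⟩ := hD'mem _ ha e1
      obtain ⟨hbD, _⟩ := hD'mem _ hb e2
      rw [g'val _ e1, g'val _ e2] at hab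
      exact hinj _ haD _ hbD hab
  · -- across-hole vertical for new hole (r+1,c)
    intro rr hrr hA hB
    have hrr' : rr + 1 = r + 1 := hrr
    have err : rr = r := by omega
    have hB' : ((r + 1 + 1, c) : Box) ∈ D' := hB
    obtain ⟨hBD, _⟩ := hD'mem _ hB' (box_ne (by omega))
    show g' (rr, c) < g' (r + 1 + 1, c)
    rw [show ((rr, c) : Box) = ((r, c) : Box) by rw [err], g'hole,
      g'val _ (box_ne (by omega))]
    exact inc.2 (r + 1) c hdown hBD
  · -- across-hole horizontal for new hole (r+1,c)
    intro cc hcc hA hB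
    have hcc' : cc + 1 = c := hcc
    have hA' : ((r + 1, cc) : Box) ∈ D' := hA
    have hB' : ((r + 1, c + 1) : Box) ∈ D' := hB
    obtain ⟨hAD, _⟩ := hD'mem _ hA' (box_ne (by omega))
    obtain ⟨hBD, _⟩ := hD'mem _ hB' (box_ne (by omega))
    show g' (r + 1, cc) < g' (r + 1, c + 1)
    rw [g'val _ (box_ne (by omega)), g'val _ (box_ne (by omega))]
    have h1 : g (r + 1, cc) < g (r + 1, cc + 1) := inc.1 (r + 1) cc hAD (by rw [hcc']; exact hdown)
    have h2 : g (r + 1, c) < g (r + 1, c + 1) := inc.1 (r + 1) c hdown hBD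
    rw [hcc'] at h1
    omega

lemma Inv_moveRight {lam nu : Finset Box} {x : Box} {D : Finset Box} {g : Box → ℕ}
    {r c : ℕ}
    (hlam : IsYoung lam) (hnu : IsYoung nu) (hx : InnerCorner lam x)
    (hhD : ((r, c) : Box) ∉ D) (hins : insert ((r, c) : Box) D = insert x (nu \ lam))
    (hx1 : x.1 ≤ r) (hx2 : x.2 ≤ c)
    (inc : IncreasingOn D g) (hinj : ∀ a ∈ D, ∀ b ∈ D, g a = g b → a = b)
    (hay : ∀ cc : ℕ, cc + 1 = c → ((r, cc) : Box) ∈ D → ((r, c + 1) : Box) ∈ D →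
      g (r, cc) < g (r, c + 1))
    (hrightD : ((r, c + 1) : Box) ∈ D)
    (hdownlt : ((r + 1, c) : Box) ∈ D → g (r, c + 1) < g (r + 1, c)) :
    SlideInv lam nu x (insert (r, c) (D.erase (r, c + 1)))
      (Function.update g (r, c) (g (r, c + 1))) (r, c + 1) := by
  set w := g (r, c + 1) with hw
  set g' := Function.update g (r, c) w with hg'
  set D' := insert ((r, c) : Box) (D.erase (r, c + 1)) with hD'
  have g'val : ∀ u : Box, u ≠ (r, c) → g' u = g u := by
    intro u hu; simp [hg', Function.update_of_ne hu]
  have g'hole : g' (r, c) = w := by simp [hg']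
  have memA : ∀ b ∈ D, b ∈ insert x (nu \ lam) := by
    intro b hb; rw [← hins]; exact Finset.mem_insert_of_mem hb
  have memD : ∀ b ∈ insert x (nu \ lam), b ≠ ((r, c) : Box) → b ∈ D := by
    intro b hb hbne; rw [← hins] at hb
    exact (Finset.mem_insert.1 hb).resolve_left hbne
  have skewR : ((r, c + 1) : Box) ∈ nu \ lam := by
    rcases Finset.mem_insert.1 (memA _ hrightD) with h | h
    · exfalso; have := congrArg Prod.snd h; simp at this; omega
    · exact h
  have hD'mem : ∀ u ∈ D', u ≠ ((r, c) : Box) → u ∈ D ∧ u ≠ ((r, c + 1) : Box) := by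
    intro u hu hune
    rcases Finset.mem_insert.1 hu with h | h
    · exact absurd h hune
    · exact ⟨Finset.mem_of_mem_erase h, Finset.ne_of_mem_erase h⟩
  have hnotv : ((r, c + 1) : Box) ∉ D' := by
    intro h
    rcases Finset.mem_insert.1 h with h | h
    · have := congrArg Prod.snd h; simp at this
    · exact (Finset.notMem_erase _ _) h
  refine ⟨hnotv, ?_, by simpa using hx1, by simp; omega, ⟨?_, ?_⟩, ?_, ?_, ?_⟩
  · rw [hD', Finset.insert_comm _ _ _, Finset.insert_erase hrightD, hins]
  · -- rows increasing
    intro s j hA hB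
    by_cases e1 : ((s, j) : Box) = ((r, c) : Box)
    · exfalso
      have es : s = r := congrArg Prod.fst e1
      have ej : j = c := congrArg Prod.snd e1
      exact hnotv (by rw [← es, ← ej]; exact hB)
    · by_cases e2 : ((s, j + 1) : Box) = ((r, c) : Box)
      · have es : s = r := congrArg Prod.fst e2
        have ej : j + 1 = c := congrArg Prod.snd e2
        obtain ⟨hAD, _⟩ := hD'mem _ hA e1
        have hAD' : ((r, j) : Box) ∈ D := by rw [← es]; exact hAD
        rw [e2, g'hole, g'val _ e1]
        have := hay j ej hAD' hrightD
        have h5 : g (s, j) = g (r, j) := by rw [es]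
        omega
      · obtain ⟨hAD, _⟩ := hD'mem _ hA e1
        obtain ⟨hBD, _⟩ := hD'mem _ hB e2
        rw [g'val _ e1, g'val _ e2]
        exact inc.1 s j hAD hBD
  · -- columns increasing
    intro s j hA hB
    by_cases e1 : ((s, j) : Box) = ((r, c) : Box)
    · have es : s = r := congrArg Prod.fst e1
      have ej : j = c := congrArg Prod.snd e1
      have hB' : ((r + 1, c) : Box) ∈ D' := by rw [← es, ← ej]; exact hB
      obtain ⟨hBD, _⟩ := hD'mem _ hB' (box_ne (by omega))
      show g' (s, j) < g' (s + 1, j)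
      rw [e1, show ((s + 1, j) : Box) = ((r + 1, c) : Box) by rw [es, ej], g'hole,
        g'val _ (box_ne (by omega))]
      exact hdownlt hBD
    · by_cases e2 : ((s + 1, j) : Box) = ((r, c) : Box)
      · have es : s + 1 = r := congrArg Prod.fst e2
        have ej : j = c := congrArg Prod.snd e2
        obtain ⟨hAD, _⟩ := hD'mem _ hA e1
        have hAD' : ((s, c) : Box) ∈ D := by rw [← ej]; exact hAD
        rw [e2, g'hole, g'val _ e1]
        have h1 : ((s, c + 1) : Box) ∈ nu \ lam :=
          above_mem hlam hnu hx (by rw [es]; exact skewR) (memA _ hAD')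
            (by omega : c < c + 1)
        have h2 : ((s, c + 1) : Box) ∈ D := by
          exact memD _ (Finset.mem_insert_of_mem h1) (box_ne (by omega))
        have h3 := inc.1 s c hAD' h2
        have h4 : g (s, c + 1) < g (s + 1, c + 1) := inc.2 s (c + 1) h2 (by rw [es]; exact hrightD)
        rw [es] at h4
        have h5 : g (s, j) = g (s, c) := by rw [ej]
        omega
      · obtain ⟨hAD, _⟩ := hD'mem _ hA e1
        obtain ⟨hBD, _⟩ := hD'mem _ hB e2
        rw [g'val _ e1, g'val _ e2]
        exact inc.2 s j hAD hBD
  · -- injectivity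
    intro a ha b hb hab
    by_cases e1 : a = ((r, c) : Box) <;> by_cases e2 : b = ((r, c) : Box)
    · rw [e1, e2]
    · exfalso
      obtain ⟨hbD, hbv⟩ := hD'mem _ hb e2
      rw [e1, g'hole, g'val _ e2] at hab
      exact hbv (hinj _ hrightD _ hbD hab).symm
    · exfalso
      obtain ⟨haD, hav⟩ := hD'mem _ ha e1
      rw [e2, g'hole, g'val _ e1] at hab
      exact hav (hinj _ haD _ hrightD hab)
    · obtain ⟨haD, _⟩ := hD'mem _ ha e1
      obtain ⟨hbD, _⟩ := hD'mem _ hb e2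
      rw [g'val _ e1, g'val _ e2] at hab
      exact hinj _ haD _ hbD hab
  · -- across-hole vertical for new hole (r, c+1)
    intro rr hrr hA hB
    have hrr' : rr + 1 = r := hrr
    have hA' : ((rr, c + 1) : Box) ∈ D' := hA
    have hB' : ((r + 1, c + 1) : Box) ∈ D' := hB
    obtain ⟨hAD, _⟩ := hD'mem _ hA' (box_ne (by omega))
    obtain ⟨hBD, _⟩ := hD'mem _ hB' (box_ne (by omega))
    show g' (rr, c + 1) < g' (r + 1, c + 1)
    rw [g'val _ (box_ne (by omega)), g'val _ (box_ne (by omega))]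
    have h1 : g (rr, c + 1) < g (rr + 1, c + 1) := inc.2 rr (c + 1) hAD (by rw [hrr']; exact hrightD)
    have h2 : g (r, c + 1) < g (r + 1, c + 1) := inc.2 r (c + 1) hrightD hBD
    rw [hrr'] at h1
    omega
  · -- across-hole horizontal for new hole (r, c+1)
    intro cc hcc hA hB
    have hcc' : cc + 1 = c + 1 := hcc
    have ecc : cc = c := by omega
    have hB' : ((r, c + 1 + 1) : Box) ∈ D' := hB
    obtain ⟨hBD, _⟩ := hD'mem _ hB' (box_ne (by omega))
    show g' (r, cc) < g' (r, c + 1 + 1)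
    rw [show ((r, cc) : Box) = ((r, c) : Box) by rw [ecc], g'hole,
      g'val _ (box_ne (by omega))]
    exact inc.1 r (c + 1) hrightD hBD

end Stmt19Aux5
section Stmt19Aux6

lemma slide_step {lam nu : Finset Box} {x : Box} (p : Finset Box × (Box → ℕ) × Box)
    (hlam : IsYoung lam) (hnu : IsYoung nu) (hx : InnerCorner lam x)
    (hInv : SlideInv lam nu x p.1 p.2.1 p.2.2) :
    SlideInv lam nu x (holeMove p).1 (holeMove p).2.1 (holeMove p).2.2 ∧
      LIS (holeMove p).1 (holeMove p).2.1 = LIS p.1 p.2.1 := by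
  obtain ⟨D, g, h⟩ := p
  obtain ⟨r, c⟩ := h
  obtain ⟨hhD, hins, hx1, hx2, inc, hinj, hax, hay⟩ := hInv
  have hhD' : ((r, c) : Box) ∉ D := hhD
  have hins' : insert ((r, c) : Box) D = insert x (nu \ lam) := hins
  have hx1' : x.1 ≤ r := hx1
  have hx2' : x.2 ≤ c := hx2
  have hax' : ∀ rr : ℕ, rr + 1 = r → ((rr, c) : Box) ∈ D → ((r + 1, c) : Box) ∈ D →
      g (rr, c) < g (r + 1, c) := hax
  have hay' : ∀ cc : ℕ, cc + 1 = c → ((r, cc) : Box) ∈ D → ((r, c + 1) : Box) ∈ D →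
      g (r, cc) < g (r, c + 1) := hay
  simp only [holeMove]
  split_ifs with c1 c2 c3
  · -- right in, down in, right smaller : move right
    exact ⟨Inv_moveRight hlam hnu hx hhD' hins' hx1' hx2' inc hinj hay' c1 (fun _ => c3),
      LIS_moveRight c1 hhD'⟩
  · -- right in, down in, down smaller : move down
    have hlt : ((r, c + 1) : Box) ∈ D → g (r + 1, c) < g (r, c + 1) := by
      intro _
      have hle : g (r + 1, c) ≤ g (r, c + 1) := not_lt.1 c3
      have hne : g (r + 1, c) ≠ g (r, c + 1) := by
        intro he
        exact box_ne (by omega) (hinj _ c2 _ c1 he)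
      omega
    exact ⟨Inv_moveDown hlam hnu hx hhD' hins' hx1' hx2' inc hinj hax' c2 hlt,
      LIS_moveDown hlam hnu hx hhD' hins' hx1' inc hinj c2 hlt⟩
  · -- right in, down out : move right
    exact ⟨Inv_moveRight hlam hnu hx hhD' hins' hx1' hx2' inc hinj hay' c1
        (fun hd => absurd hd c2),
      LIS_moveRight c1 hhD'⟩
  · -- right out, down in : move down
    rename_i c4
    exact ⟨Inv_moveDown hlam hnu hx hhD' hins' hx1' hx2' inc hinj hax' c4
        (fun hr => absurd hr c1),
      LIS_moveDown hlam hnu hx hhD' hins' hx1' inc hinj c4 (fun hr => absurd hr c1)⟩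
  · -- no moves
    exact ⟨⟨hhD, hins, hx1, hx2, inc, hinj, hax, hay⟩, rfl⟩

lemma slide_iter {lam nu : Finset Box} {x : Box}
    (hlam : IsYoung lam) (hnu : IsYoung nu) (hx : InnerCorner lam x)
    (n : ℕ) (p : Finset Box × (Box → ℕ) × Box)
    (hInv : SlideInv lam nu x p.1 p.2.1 p.2.2) :
    SlideInv lam nu x (holeMove^[n] p).1 (holeMove^[n] p).2.1 (holeMove^[n] p).2.2 ∧
      LIS (holeMove^[n] p).1 (holeMove^[n] p).2.1 = LIS p.1 p.2.1 := by
  induction n with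
  | zero => exact ⟨hInv, rfl⟩
  | succ n ih =>
    rw [Function.iterate_succ_apply']
    obtain ⟨h1, h2⟩ := ih
    obtain ⟨h3, h4⟩ := slide_step _ hlam hnu hx h1
    exact ⟨h3, h4.trans h2⟩

end Stmt19Aux6

/-- an ordinary jeu de taquin slide of a standard Young tableau
preserves the length of the longest strictly increasing subsequence of the
reading word. -/
theorem stmt19 (lam nu : Finset Box) (f : Box → ℕ) (x : Box)
    (hlam : IsYoung lam) (hnu : IsYoung nu) (hsub : lam ⊆ nu)
    (hT : IsSYT (nu \ lam) f) (hx : InnerCorner lam x) :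
    LIS (jdt x (nu \ lam) f).1 (jdt x (nu \ lam) f).2 = LIS (nu \ lam) f := by
  have hInv : SlideInv lam nu x (nu \ lam) f x := by
    refine ⟨?_, rfl, le_refl _, le_refl _, hT.1.1, hT.2, ?_, ?_⟩
    · intro h
      exact (Finset.mem_sdiff.1 h).2 hx.1
    · intro rr hrr hA _
      exfalso
      have h1 : ((rr + 1, x.2) : Box) = x := by rw [hrr]
      have h2 : ((rr + 1, x.2) : Box) ∈ lam := by rw [h1]; exact hx.1
      exact (Finset.mem_sdiff.1 hA).2 (hlam.1 rr x.2 h2)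
    · intro cc hcc hA _
      exfalso
      have h1 : ((x.1, cc + 1) : Box) = x := by rw [hcc]
      have h2 : ((x.1, cc + 1) : Box) ∈ lam := by rw [h1]; exact hx.1
      exact (Finset.mem_sdiff.1 hA).2 (hlam.2 x.1 cc h2)
  have := slide_iter hlam hnu hx (nu \ lam).card ((nu \ lam), f, x) hInv
  simpa [jdt] using this.2
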